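/- Let S = R[x;σ] be the skew polynomial ring with σ a ring automorphism of R. If M is a completely σ-compatible right R-module, then Att(M[x⁻¹]_S) ⊇ { P[x] : P ∈ Att(M_R) }, i.e., for every attached prime P of the right R-module M, the ideal P[x] of polynomials with coefficients in P is an attached prime of the right S-module M[x⁻¹]. -/

import Mathlib

/-!
STATEMENT 11. Let `S = R[x;σ]` be the skew polynomial ring with `σ` a ring automorphism of `R`.
If `M` is a completely `σ`-compatible right `R`-module, then
`Att(M[x⁻¹]_S) ⊇ { P[x] : P ∈ Att(M_R) }`, i.e. for every attached prime `P` of the right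
`R`-module `M`, the ideal `P[x]` of polynomials with coefficients in `P` is an attached prime of
the right `S`-module `M[x⁻¹]`.

Encoding: right modules over a ring `T` are modules over `Tᵐᵒᵖ` (`m·t := op t • m`).  The skew
polynomial ring is axiomatized by `hbasis` (free left `R`-module with basis `{xᵏ}`) and `hcomm`
(`x·r = σ(r)·x`).  The inverse polynomial module `M[x⁻¹]` is `ℕ →₀ M` (coefficient of `x⁻ⁱ` at
`i`), a right `S`-module with action `(m x⁻ⁱ)·(r xʲ) = m σ⁻ⁱ(r) x^{-(i-j)}` if `j ≤ i` and `0`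
otherwise (hypothesis `hact`).
-/

open MulOpposite Finsupp

/-- A prime ideal of a (possibly noncommutative) ring `T`, as a set: a proper two-sided ideal
`P` such that `aTb ⊆ P` implies `a ∈ P` or `b ∈ P`. -/
def IsPrimeIdealSet (T : Type*) [Ring T] (P : Set T) : Prop :=
  (0 : T) ∈ P ∧ (∀ a ∈ P, ∀ b ∈ P, a + b ∈ P) ∧
    (∀ a ∈ P, ∀ t : T, t * a ∈ P ∧ a * t ∈ P) ∧ P ≠ Set.univ ∧
    ∀ a b : T, (∀ t : T, a * t * b ∈ P) → a ∈ P ∨ b ∈ P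

/-- The annihilator of the quotient of the right `T`-module `L` by the subset `Nset`, that is
`{t : T | L·t ⊆ Nset}`. -/
def annIn (T : Type*) [Ring T] (L : Type*) [AddCommGroup L] [Module Tᵐᵒᵖ L]
    (Nset : Set L) : Set T :=
  {t : T | ∀ l : L, op t • l ∈ Nset}

/-- The quotient `L/N` is a coprime right `T`-module: it is nonzero and
`ann_T(L/N) = ann_T((L/N)/(N'/N))` for every proper submodule `N'/N` of `L/N`; equivalently,
`ann_T(L/N) = ann_T(L/N')` for every submodule `N ≤ N' < L`. -/
def CoprimeQuot (T : Type*) [Ring T] (L : Type*) [AddCommGroup L] [Module Tᵐᵒᵖ L]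
    (N : Submodule Tᵐᵒᵖ L) : Prop :=
  (∃ l : L, l ∉ N) ∧
    ∀ N' : Submodule Tᵐᵒᵖ L, N ≤ N' → N' ≠ ⊤ →
      annIn T L (N : Set L) = annIn T L (N' : Set L)

/-- The set of attached prime ideals of the right `T`-module `L`: prime ideals of the form
`ann_T(L/N)` with `L/N` a coprime quotient of `L`. -/
def AttSet (T : Type*) [Ring T] (L : Type*) [AddCommGroup L] [Module Tᵐᵒᵖ L] : Set (Set T) :=
  {P | IsPrimeIdealSet T P ∧
    ∃ N : Submodule Tᵐᵒᵖ L, CoprimeQuot T L N ∧ P = annIn T L (N : Set L)}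

/-- For an ideal `P` of `R`, `polyIn ι x P` is `P[x]`: the set of polynomials in `S` all of
whose coefficients lie in `P`. -/
def polyIn {R S : Type*} [Ring R] [Ring S] (ι : R →+* S) (x : S) (P : Set R) : Set S :=
  {s : S | ∃ c : ℕ →₀ R, (∀ k, c k ∈ P) ∧ s = c.sum fun k r => ι r * x ^ k}

/-- `M` is completely `σ`-compatible: `M/N` is `σ`-compatible for every submodule `N`. -/
def CompletelySigmaCompatible (R : Type*) [Ring R] (σ : R → R)
    (M : Type*) [AddCommGroup M] [Module Rᵐᵒᵖ M] : Prop :=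
  ∀ (N : Submodule Rᵐᵒᵖ M) (m : M ⧸ N) (r : R),
    op r • m = 0 ↔ op (σ r) • m = 0

namespace SkxAux

variable {R : Type*} [Ring R] (σ : R ≃+* R)
variable {S : Type*} [Ring S] (ι : R →+* S) (x : S)

lemma symm_iter_zero (n : ℕ) : (⇑σ.symm)^[n] (0 : R) = 0 :=
  Function.iterate_fixed (by simp) n

lemma iter_zero (n : ℕ) : (⇑σ)^[n] (0 : R) = 0 :=
  Function.iterate_fixed (by simp) n

lemma symm_iter_one (n : ℕ) : (⇑σ.symm)^[n] (1 : R) = 1 :=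
  Function.iterate_fixed (by simp) n

lemma iter_one (n : ℕ) : (⇑σ)^[n] (1 : R) = 1 :=
  Function.iterate_fixed (by simp) n

lemma iter_cancel (n : ℕ) (r : R) : (⇑σ)^[n] ((⇑σ.symm)^[n] r) = r :=
  (Function.LeftInverse.iterate (fun a => σ.apply_symm_apply a) n) r

lemma symm_iter_cancel (n : ℕ) (r : R) : (⇑σ.symm)^[n] ((⇑σ)^[n] r) = r :=
  (Function.LeftInverse.iterate (fun a => σ.symm_apply_apply a) n) r

/-- The map `c ↦ ∑ ι(cₖ) xᵏ` as an additive monoid hom. -/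
noncomputable def Phi : (ℕ →₀ R) →+ S where
  toFun c := c.sum fun k r => ι r * x ^ k
  map_zero' := Finsupp.sum_zero_index
  map_add' a b := by
    show (a + b).sum (fun k r => ι r * x ^ k) = _
    exact Finsupp.sum_add_index' (fun k => by simp) (fun k r s => by simp [add_mul])

lemma Phi_apply (c : ℕ →₀ R) : Phi ι x c = c.sum fun k r => ι r * x ^ k := rfl

lemma Phi_apply' (c : ℕ →₀ R) : Phi ι x c = ∑ k ∈ c.support, ι (c k) * x ^ k := rfl

lemma Phi_single (k : ℕ) (r : R) : Phi ι x (Finsupp.single k r) = ι r * x ^ k := by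
  rw [Phi_apply]
  exact Finsupp.sum_single_index (by simp)

lemma Phi_bij (hbasis : Function.Bijective fun c : ℕ →₀ R => c.sum fun k r => ι r * x ^ k) :
    Function.Bijective (Phi ι x) := hbasis

lemma xpow_mul (hcomm : ∀ r : R, x * ι r = ι (σ r) * x) (k : ℕ) (r : R) :
    x ^ k * ι r = ι ((⇑σ)^[k] r) * x ^ k := by
  induction k generalizing r with
  | zero => simp
  | succ n ih =>
    rw [pow_succ, mul_assoc, hcomm, ← mul_assoc, ih (σ r), mul_assoc, ← pow_succ,
      Function.iterate_succ_apply]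

lemma mon_mul (hcomm : ∀ r : R, x * ι r = ι (σ r) * x) (r u : R) (k j : ℕ) :
    (ι r * x ^ k) * (ι u * x ^ j) = ι (r * (⇑σ)^[k] u) * x ^ (k + j) := by
  rw [mul_assoc, ← mul_assoc (x ^ k), xpow_mul σ ι x hcomm, mul_assoc, ← pow_add,
    ← mul_assoc, ← map_mul]


section ModuleSide

variable {M : Type*} [AddCommGroup M] [Module Rᵐᵒᵖ M] [Module Sᵐᵒᵖ (ℕ →₀ M)]

/-- Action of a polynomial on a single inverse monomial. -/
lemma act_single_eq
    (hact : ∀ (m : M) (i : ℕ) (r : R) (j : ℕ),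
      op (ι r * x ^ j) • Finsupp.single i m =
        if j ≤ i then Finsupp.single (i - j) (op ((⇑σ.symm)^[i] r) • m)
        else (0 : ℕ →₀ M))
    (c : ℕ →₀ R) (i : ℕ) (m : M) :
    op (Phi ι x c) • (Finsupp.single i m : ℕ →₀ M) =
      ∑ k ∈ c.support,
        (if k ≤ i then Finsupp.single (i - k) (op ((⇑σ.symm)^[i] (c k)) • m)
         else (0 : ℕ →₀ M)) := by
  rw [Phi_apply' ι x c,
    show op (∑ k ∈ c.support, ι (c k) * x ^ k) = ∑ k ∈ c.support, op (ι (c k) * x ^ k) from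
      map_sum (opAddEquiv : S ≃+ Sᵐᵒᵖ).toAddMonoidHom _ _,
    Finset.sum_smul]
  refine Finset.sum_congr rfl fun k _ => ?_
  exact hact m i (c k) k

/-- Reading off a coefficient of the action on a single monomial. -/
lemma act_single_apply
    (hact : ∀ (m : M) (i : ℕ) (r : R) (j : ℕ),
      op (ι r * x ^ j) • Finsupp.single i m =
        if j ≤ i then Finsupp.single (i - j) (op ((⇑σ.symm)^[i] r) • m)
        else (0 : ℕ →₀ M))
    (c : ℕ →₀ R) (i : ℕ) (m : M) {k₀ : ℕ} (hk : k₀ ≤ i) :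
    (op (Phi ι x c) • (Finsupp.single i m : ℕ →₀ M)) (i - k₀) =
      op ((⇑σ.symm)^[i] (c k₀)) • m := by
  classical
  rw [act_single_eq σ ι x hact, Finset.sum_apply' (i - k₀)]
  rw [Finset.sum_eq_single k₀]
  · rw [if_pos hk, Finsupp.single_apply, if_pos rfl]
  · intro k hkmem hkne
    by_cases h : k ≤ i
    · rw [if_pos h, Finsupp.single_apply, if_neg (by omega)]
    · rw [if_neg h]; rfl
  · intro hk₀
    rw [Finsupp.notMem_support_iff.mp hk₀, if_pos hk, symm_iter_zero, op_zero, zero_smul,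
      Finsupp.single_zero, Finsupp.coe_zero, Pi.zero_apply]

/-- Decompose the action on an arbitrary element of the inverse polynomial module. -/
lemma act_decomp (s : S) (f : ℕ →₀ M) :
    op s • f = ∑ i ∈ f.support, op s • (Finsupp.single i (f i) : ℕ →₀ M) := by
  conv_lhs => rw [← Finsupp.sum_single f]
  rw [Finsupp.sum, Finset.smul_sum]


section Compat

lemma compat_mem
    (hcompat : CompletelySigmaCompatible R (⇑σ) M)
    (W : Submodule Rᵐᵒᵖ M) (m : M) (r : R) :
    op r • m ∈ W ↔ op (σ r) • m ∈ W := by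
  have h := hcompat W (Submodule.Quotient.mk m) r
  rw [← Submodule.Quotient.mk_smul, ← Submodule.Quotient.mk_smul,
    Submodule.Quotient.mk_eq_zero, Submodule.Quotient.mk_eq_zero] at h
  exact h

lemma compat_iter
    (hcompat : CompletelySigmaCompatible R (⇑σ) M)
    (W : Submodule Rᵐᵒᵖ M) (m : M) (n : ℕ) (r : R) :
    op ((⇑σ)^[n] r) • m ∈ W ↔ op r • m ∈ W := by
  induction n with
  | zero => rfl
  | succ n ih =>
    rw [Function.iterate_succ_apply', ← compat_mem σ hcompat W m ((⇑σ)^[n] r), ih]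

lemma compat_symm_iter
    (hcompat : CompletelySigmaCompatible R (⇑σ) M)
    (W : Submodule Rᵐᵒᵖ M) (m : M) (n : ℕ) (r : R) :
    op ((⇑σ.symm)^[n] r) • m ∈ W ↔ op r • m ∈ W := by
  conv_rhs => rw [← iter_cancel σ n r]
  rw [compat_iter σ hcompat W m n]

lemma ann_sigma_iff
    (hcompat : CompletelySigmaCompatible R (⇑σ) M)
    (W : Submodule Rᵐᵒᵖ M) (r : R) :
    r ∈ annIn R M (W : Set M) ↔ σ r ∈ annIn R M (W : Set M) := by
  constructor
  · intro h m; exact (compat_mem σ hcompat W m r).mp (h m)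
  · intro h m; exact (compat_mem σ hcompat W m r).mpr (h m)

lemma ann_iter_iff
    (hcompat : CompletelySigmaCompatible R (⇑σ) M)
    (W : Submodule Rᵐᵒᵖ M) (n : ℕ) (r : R) :
    (⇑σ)^[n] r ∈ annIn R M (W : Set M) ↔ r ∈ annIn R M (W : Set M) := by
  constructor
  · intro h m; exact (compat_iter σ hcompat W m n r).mp (h m)
  · intro h m; exact (compat_iter σ hcompat W m n r).mpr (h m)

lemma ann_symm_iter_iff
    (hcompat : CompletelySigmaCompatible R (⇑σ) M)
    (W : Submodule Rᵐᵒᵖ M) (n : ℕ) (r : R) :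
    (⇑σ.symm)^[n] r ∈ annIn R M (W : Set M) ↔ r ∈ annIn R M (W : Set M) := by
  constructor
  · intro h m; exact (compat_symm_iter σ hcompat W m n r).mp (h m)
  · intro h m; exact (compat_symm_iter σ hcompat W m n r).mpr (h m)

section Modules

variable (hbasis : Function.Bijective fun c : ℕ →₀ R => c.sum fun k r => ι r * x ^ k)
variable (hact : ∀ (m : M) (i : ℕ) (r : R) (j : ℕ),
      op (ι r * x ^ j) • Finsupp.single i m =
        if j ≤ i then Finsupp.single (i - j) (op ((⇑σ.symm)^[i] r) • m)
        else (0 : ℕ →₀ M))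

/-- `N[x⁻¹]`, the submodule of the inverse polynomial module with all coefficients in `N`. -/
noncomputable def Ntil (N : Submodule Rᵐᵒᵖ M) : Submodule Sᵐᵒᵖ (ℕ →₀ M) where
  carrier := {f | ∀ i, f i ∈ N}
  add_mem' := by intro f g hf hg i; rw [Finsupp.add_apply]; exact N.add_mem (hf i) (hg i)
  zero_mem' := by intro i; simp
  smul_mem' := by
    intro z f hf
    obtain ⟨c, hc⟩ := hbasis.2 (unop z)
    have hz : z = op (Phi ι x c) := by rw [show Phi ι x c = unop z from hc, op_unop]
    rw [hz, act_decomp]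
    intro d
    rw [Finset.sum_apply' d]
    refine Submodule.sum_mem N fun i _ => ?_
    rw [act_single_eq σ ι x hact, Finset.sum_apply' d]
    refine Submodule.sum_mem N fun k _ => ?_
    by_cases h : k ≤ i
    · rw [if_pos h, Finsupp.single_apply]
      by_cases h2 : i - k = d
      · rw [if_pos h2]
        exact N.smul_mem _ (hf i)
      · rw [if_neg h2]; exact N.zero_mem
    · rw [if_neg h]; exact N.zero_mem

lemma mem_Ntil (N : Submodule Rᵐᵒᵖ M) (f : ℕ →₀ M) :
    f ∈ Ntil σ ι x hbasis hact N ↔ ∀ i, f i ∈ N := Iff.rfl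

lemma single_mem_Ntil (N : Submodule Rᵐᵒᵖ M) {d : ℕ} {v : M} (hv : v ∈ N) :
    (Finsupp.single d v : ℕ →₀ M) ∈ Ntil σ ι x hbasis hact N := by
  intro i
  rw [Finsupp.single_apply]
  by_cases h : d = i
  · rw [if_pos h]; exact hv
  · rw [if_neg h]; exact N.zero_mem

/-- The submodule of elements whose single at degree `d` lies in `L'`. -/
noncomputable def coeffMod (L' : Submodule Sᵐᵒᵖ (ℕ →₀ M)) (d : ℕ) : Submodule Rᵐᵒᵖ M where
  carrier := {m | (Finsupp.single d m : ℕ →₀ M) ∈ L'}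
  add_mem' := by
    intro m m' hm hm'
    show (Finsupp.single d (m + m') : ℕ →₀ M) ∈ L'
    rw [Finsupp.single_add]
    exact L'.add_mem hm hm'
  zero_mem' := by
    show (Finsupp.single d (0 : M) : ℕ →₀ M) ∈ L'
    rw [Finsupp.single_zero]
    exact L'.zero_mem
  smul_mem' := by
    intro z m hm
    show (Finsupp.single d (z • m) : ℕ →₀ M) ∈ L'
    have h := hact m d ((⇑σ)^[d] (unop z)) 0
    rw [if_pos (Nat.zero_le d), pow_zero, mul_one, Nat.sub_zero, symm_iter_cancel, op_unop] at h
    rw [← h]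
    exact L'.smul_mem _ hm

lemma mem_coeffMod (L' : Submodule Sᵐᵒᵖ (ℕ →₀ M)) (d : ℕ) (m : M) :
    m ∈ coeffMod σ ι x hact L' d ↔ (Finsupp.single d m : ℕ →₀ M) ∈ L' := Iff.rfl

lemma polyIn_subset_ann
    (hcompat : CompletelySigmaCompatible R (⇑σ) M)
    (N : Submodule Rᵐᵒᵖ M) {s : S}
    (hs : s ∈ polyIn ι x (annIn R M (N : Set M))) :
    ∀ f : ℕ →₀ M, op s • f ∈ Ntil σ ι x hbasis hact N := by
  obtain ⟨c, hcP, rfl⟩ := hs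
  intro f
  rw [show (c.sum fun k r => ι r * x ^ k) = Phi ι x c from rfl, act_decomp]
  refine Submodule.sum_mem _ fun i _ => ?_
  rw [act_single_eq σ ι x hact]
  refine Submodule.sum_mem _ fun k _ => ?_
  by_cases h : k ≤ i
  · rw [if_pos h]
    refine single_mem_Ntil σ ι x hbasis hact N ?_
    exact (compat_symm_iter σ hcompat N (f i) i (c k)).mpr (hcP k (f i))
  · rw [if_neg h]; exact Submodule.zero_mem _

lemma ann_Ntil_eq
    (hcompat : CompletelySigmaCompatible R (⇑σ) M)
    (N : Submodule Rᵐᵒᵖ M) :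
    annIn S (ℕ →₀ M) ((Ntil σ ι x hbasis hact N : Submodule Sᵐᵒᵖ (ℕ →₀ M)) : Set (ℕ →₀ M)) =
      polyIn ι x (annIn R M (N : Set M)) := by
  ext s
  constructor
  · intro hs
    obtain ⟨c, hc⟩ := hbasis.2 s
    refine ⟨c, fun k => ?_, hc.symm⟩
    intro m
    have h1 : op s • (Finsupp.single k m : ℕ →₀ M) ∈ Ntil σ ι x hbasis hact N := hs _
    have h2 := h1 (k - k)
    rw [← show Phi ι x c = s from hc, act_single_apply σ ι x hact c k m le_rfl] at h2
    exact (compat_symm_iter σ hcompat N m k (c k)).mp h2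
  · intro hs f
    exact polyIn_subset_ann σ ι x hbasis hact hcompat N hs f

lemma annL_subset_polyIn
    (hcompat : CompletelySigmaCompatible R (⇑σ) M)
    (N : Submodule Rᵐᵒᵖ M) (hNco : CoprimeQuot R M N)
    (L' : Submodule Sᵐᵒᵖ (ℕ →₀ M))
    (hle : Ntil σ ι x hbasis hact N ≤ L') (hne : L' ≠ ⊤) :
    annIn S (ℕ →₀ M) (L' : Set (ℕ →₀ M)) ⊆ polyIn ι x (annIn R M (N : Set M)) := by
  classical
  intro t ht
  obtain ⟨c, hc⟩ := hbasis.2 t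
  have hc' : Phi ι x c = t := hc
  have hNle : ∀ d, N ≤ coeffMod σ ι x hact L' d := fun d m hm =>
    hle (single_mem_Ntil σ ι x hbasis hact N hm)
  have hmono : ∀ d, coeffMod σ ι x hact L' (d+1) ≤ coeffMod σ ι x hact L' d := by
    intro d m hm
    have h := hact m (d+1) 1 1
    rw [if_pos (by omega), symm_iter_one, map_one, op_one, one_smul,
      Nat.add_sub_cancel] at h
    show (Finsupp.single d m : ℕ →₀ M) ∈ L'
    rw [← h]
    exact L'.smul_mem _ hm
  have hmono' : ∀ j d, coeffMod σ ι x hact L' (d + j) ≤ coeffMod σ ι x hact L' d := by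
    intro j
    induction j with
    | zero => intro d; exact le_rfl
    | succ n ih =>
      intro d
      have : d + (n + 1) = (d + n) + 1 := by omega
      rw [this]
      exact le_trans (hmono (d + n)) (le_trans (ih d) le_rfl)
  have hexist : ∃ d, coeffMod σ ι x hact L' d ≠ ⊤ := by
    by_contra h
    push_neg at h
    apply hne
    rw [Submodule.eq_top_iff']
    intro f
    rw [← Finsupp.sum_single f, Finsupp.sum]
    refine Submodule.sum_mem _ fun i _ => ?_
    have : f i ∈ coeffMod σ ι x hact L' i := by rw [h i]; trivial
    exact this
  set i0 := Nat.find hexist with hi0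
  have hstar : coeffMod σ ι x hact L' i0 ≠ ⊤ := Nat.find_spec hexist
  have hbelow : ∀ d, d < i0 → coeffMod σ ι x hact L' d = ⊤ := by
    intro d hd
    have := Nat.find_min hexist hd
    exact not_not.mp this
  have hannEq : annIn R M ((coeffMod σ ι x hact L' i0 : Submodule Rᵐᵒᵖ M) : Set M) =
      annIn R M (N : Set M) := (hNco.2 _ (hNle i0) hstar).symm
  have key : ∀ k, c k ∈ annIn R M (N : Set M) := by
    intro k
    induction k using Nat.strong_induction_on with
    | _ k IH =>
      by_cases hksupp : k ∈ c.support
      · have h1 : (⇑σ.symm)^[k + i0] (c k) ∈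
            annIn R M ((coeffMod σ ι x hact L' i0 : Submodule Rᵐᵒᵖ M) : Set M) := by
          intro m
          have hg : op t • (Finsupp.single (k+i0) m : ℕ →₀ M) ∈ L' := ht _
          rw [← hc', act_single_eq σ ι x hact] at hg
          set term : ℕ → (ℕ →₀ M) := fun j =>
            if j ≤ k + i0 then
              Finsupp.single (k + i0 - j) (op ((⇑σ.symm)^[k+i0] (c j)) • m)
            else 0 with hterm
          have hrest : ∀ j ∈ c.support.erase k, term j ∈ L' := by
            intro j hj
            obtain ⟨hjk, hjsupp⟩ := Finset.mem_erase.mp hj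
            by_cases hji : j ≤ k + i0
            · rw [hterm]; dsimp only; rw [if_pos hji]
              rcases lt_or_gt_of_ne hjk with hlt | hgt
              · have hcj : c j ∈ annIn R M (N : Set M) := IH j hlt
                have hmem : op ((⇑σ.symm)^[k+i0] (c j)) • m ∈ N :=
                  (compat_symm_iter σ hcompat N m _ (c j)).mpr (hcj m)
                exact hle (single_mem_Ntil σ ι x hbasis hact N hmem)
              · have hd : k + i0 - j < i0 := by omega
                have hmem : op ((⇑σ.symm)^[k+i0] (c j)) • m ∈
                    coeffMod σ ι x hact L' (k + i0 - j) := by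
                  rw [hbelow _ hd]; trivial
                exact hmem
            · rw [hterm]; dsimp only; rw [if_neg hji]; exact L'.zero_mem
          have hsum : ∑ j ∈ c.support.erase k, term j ∈ L' := Submodule.sum_mem _ hrest
          have hterm_k : term k ∈ L' := by
            have heq : term k =
                (∑ j ∈ c.support, term j) - ∑ j ∈ c.support.erase k, term j := by
              rw [← Finset.add_sum_erase _ term hksupp]
              abel
            rw [heq]
            exact L'.sub_mem hg hsum
          have hform : term k =
              Finsupp.single i0 (op ((⇑σ.symm)^[k+i0] (c k)) • m) := by
            rw [hterm]; dsimp only; rw [if_pos (by omega)]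
            congr 1
            omega
          rw [hform] at hterm_k
          exact hterm_k
        rw [hannEq] at h1
        exact (ann_symm_iter_iff σ hcompat N (k+i0) (c k)).mp h1
      · rw [Finsupp.notMem_support_iff.mp hksupp]
        intro m
        rw [op_zero, zero_smul]
        exact N.zero_mem
  exact ⟨c, key, hc.symm⟩

section Ideal

lemma Phi_mul3 (hcomm : ∀ r : R, x * ι r = ι (σ r) * x) (c : ℕ →₀ R) (u : R) (d : ℕ →₀ R) :
    Phi ι x c * ι u * Phi ι x d =
      Phi ι x (∑ k ∈ c.support, ∑ j ∈ d.support,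
        Finsupp.single (k + j) (c k * (⇑σ)^[k] u * (⇑σ)^[k] (d j))) := by
  rw [Phi_apply' ι x c, Phi_apply' ι x d, map_sum, Finset.sum_mul, Finset.sum_mul]
  refine Finset.sum_congr rfl fun k _ => ?_
  have h1 : ι (c k) * x ^ k * ι u = ι (c k * (⇑σ)^[k] u) * x ^ k := by
    have h := mon_mul σ ι x hcomm (c k) u k 0
    simpa using h
  rw [h1, Finset.mul_sum, map_sum]
  refine Finset.sum_congr rfl fun j _ => ?_
  rw [Phi_single, mon_mul σ ι x hcomm]

lemma Phi_mul (hcomm : ∀ r : R, x * ι r = ι (σ r) * x) (c d : ℕ →₀ R) :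
    Phi ι x c * Phi ι x d =
      Phi ι x (∑ k ∈ c.support, ∑ j ∈ d.support,
        Finsupp.single (k + j) (c k * (⇑σ)^[k] (d j))) := by
  have h := Phi_mul3 σ ι x hcomm c 1 d
  simpa [iter_one σ] using h

lemma doubleD_apply (sa sb : Finset ℕ) (v : ℕ → ℕ → R) (n : ℕ) :
    ((∑ k ∈ sa, ∑ j ∈ sb, Finsupp.single (k + j) (v k j)) : ℕ →₀ R) n =
      ∑ k ∈ sa, ∑ j ∈ sb, (if k + j = n then v k j else 0) := by
  classical
  rw [Finset.sum_apply' n]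
  refine Finset.sum_congr rfl fun k _ => ?_
  rw [Finset.sum_apply' n]
  refine Finset.sum_congr rfl fun j _ => ?_
  rw [Finsupp.single_apply]

lemma sum_mem_P {P : Set R} (h0 : (0:R) ∈ P) (hadd : ∀ a ∈ P, ∀ b ∈ P, a + b ∈ P)
    {α : Type*} (s : Finset α) (g : α → R) (hg : ∀ i ∈ s, g i ∈ P) :
    ∑ i ∈ s, g i ∈ P := by
  classical
  induction s using Finset.induction_on with
  | empty => simpa using h0
  | insert _ _ hnotmem ih =>
    rw [Finset.sum_insert hnotmem]
    exact hadd _ (hg _ (Finset.mem_insert_self _ _))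
      _ (ih fun i hi => hg i (Finset.mem_insert_of_mem hi))

lemma polyIn_prime
    (hbasis : Function.Bijective fun c : ℕ →₀ R => c.sum fun k r => ι r * x ^ k)
    (hcomm : ∀ r : R, x * ι r = ι (σ r) * x)
    (P : Set R) (hP : IsPrimeIdealSet R P)
    (hσP : ∀ r : R, r ∈ P ↔ σ r ∈ P) :
    IsPrimeIdealSet S (polyIn ι x P) := by
  classical
  obtain ⟨h0, hadd, hmul, hne, hpr⟩ := hP
  have hσiter : ∀ (n : ℕ) (r : R), r ∈ P ↔ (⇑σ)^[n] r ∈ P := by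
    intro n
    induction n with
    | zero => intro r; rfl
    | succ n ih =>
      intro r
      rw [Function.iterate_succ_apply', ← hσP ((⇑σ)^[n] r), ih r]
  have hneg : ∀ a ∈ P, -a ∈ P := by
    intro a ha
    have := (hmul a ha (-1)).1
    rwa [neg_one_mul] at this
  have hsub : ∀ a ∈ P, ∀ b ∈ P, a - b ∈ P := by
    intro a ha b hb
    rw [sub_eq_add_neg]
    exact hadd a ha _ (hneg b hb)
  refine ⟨⟨0, fun k => by simpa using h0, by simp⟩, ?_, ?_, ?_, ?_⟩
  · -- additive closure
    rintro a ⟨ca, hcaP, rfl⟩ b ⟨cb, hcbP, rfl⟩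
    refine ⟨ca + cb, fun k => ?_, ?_⟩
    · rw [Finsupp.add_apply]; exact hadd _ (hcaP k) _ (hcbP k)
    · exact (map_add (Phi ι x) ca cb).symm
  · -- two-sided ideal
    rintro a ⟨ca, hcaP, rfl⟩ t
    obtain ⟨ct, hct⟩ := hbasis.2 t
    have hct' : Phi ι x ct = t := hct
    constructor
    · -- t * a
      refine ⟨∑ k ∈ ct.support, ∑ j ∈ ca.support,
          Finsupp.single (k + j) (ct k * (⇑σ)^[k] (ca j)), fun n => ?_, ?_⟩
      · rw [doubleD_apply]
        refine sum_mem_P h0 hadd _ _ fun k _ => ?_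
        refine sum_mem_P h0 hadd _ _ fun j _ => ?_
        by_cases h : k + j = n
        · rw [if_pos h]
          exact (hmul _ ((hσiter k (ca j)).mp (hcaP j)) (ct k)).1
        · rw [if_neg h]; exact h0
      · rw [← hct']
        exact Phi_mul σ ι x hcomm ct ca
    · -- a * t
      refine ⟨∑ k ∈ ca.support, ∑ j ∈ ct.support,
          Finsupp.single (k + j) (ca k * (⇑σ)^[k] (ct j)), fun n => ?_, ?_⟩
      · rw [doubleD_apply]
        refine sum_mem_P h0 hadd _ _ fun k _ => ?_
        refine sum_mem_P h0 hadd _ _ fun j _ => ?_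
        by_cases h : k + j = n
        · rw [if_pos h]
          exact (hmul _ (hcaP k) _).2
        · rw [if_neg h]; exact h0
      · rw [← hct']
        exact Phi_mul σ ι x hcomm ca ct
  · -- proper
    intro huniv
    have h1 : (1 : S) ∈ polyIn ι x P := huniv ▸ Set.mem_univ 1
    obtain ⟨c, hcP, hc⟩ := h1
    have hone : Phi ι x (Finsupp.single 0 (1:R)) = 1 := by
      rw [Phi_single]; simp
    have hceq : c = Finsupp.single 0 (1:R) := by
      apply Phi_bij ι x hbasis |>.1
      rw [hone]
      exact hc.symm
    have h1P : (1 : R) ∈ P := by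
      have := hcP 0
      rwa [hceq, Finsupp.single_apply, if_pos rfl] at this
    apply hne
    ext r
    simp only [Set.mem_univ, iff_true]
    have := (hmul 1 h1P r).1
    rwa [mul_one] at this
  · -- primeness
    intro a b hab
    by_contra hcon
    push_neg at hcon
    obtain ⟨ha, hb⟩ := hcon
    obtain ⟨ca, hca⟩ := hbasis.2 a
    obtain ⟨cb, hcb⟩ := hbasis.2 b
    have hca' : Phi ι x ca = a := hca
    have hcb' : Phi ι x cb = b := hcb
    have hnall_a : ¬ ∀ k, ca k ∈ P := fun h => ha ⟨ca, h, hca'.symm⟩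
    have hnall_b : ¬ ∀ k, cb k ∈ P := fun h => hb ⟨cb, h, hcb'.symm⟩
    set A := ca.support.filter (fun k => ca k ∉ P) with hA_def
    set B := cb.support.filter (fun k => cb k ∉ P) with hB_def
    have hA : A.Nonempty := by
      obtain ⟨k, hk⟩ := not_forall.mp hnall_a
      exact ⟨k, Finset.mem_filter.mpr ⟨Finsupp.mem_support_iff.mpr
        (fun h0' => hk (h0' ▸ h0)), hk⟩⟩
    have hB : B.Nonempty := by
      obtain ⟨k, hk⟩ := not_forall.mp hnall_b
      exact ⟨k, Finset.mem_filter.mpr ⟨Finsupp.mem_support_iff.mpr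
        (fun h0' => hk (h0' ▸ h0)), hk⟩⟩
    set p := A.max' hA with hp_def
    set q := B.max' hB with hq_def
    have hpA : p ∈ A := A.max'_mem hA
    have hqB : q ∈ B := B.max'_mem hB
    have hpP : ca p ∉ P := (Finset.mem_filter.mp hpA).2
    have hqP : cb q ∉ P := (Finset.mem_filter.mp hqB).2
    have hp_supp : p ∈ ca.support := (Finset.mem_filter.mp hpA).1
    have hq_supp : q ∈ cb.support := (Finset.mem_filter.mp hqB).1
    have hgt_a : ∀ k, p < k → ca k ∈ P := by
      intro k hk
      by_contra hknot
      have : k ∈ A := Finset.mem_filter.mpr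
        ⟨Finsupp.mem_support_iff.mpr (fun h0' => hknot (h0' ▸ h0)), hknot⟩
      exact absurd (A.le_max' k this) (by omega)
    have hgt_b : ∀ k, q < k → cb k ∈ P := by
      intro k hk
      by_contra hknot
      have : k ∈ B := Finset.mem_filter.mpr
        ⟨Finsupp.mem_support_iff.mpr (fun h0' => hknot (h0' ▸ h0)), hknot⟩
      exact absurd (B.le_max' k this) (by omega)
    have hval : ∀ u : R, ca p * (⇑σ)^[p] u * (⇑σ)^[p] (cb q) ∈ P := by
      intro u
      have hprod := hab (ι u)
      rw [← hca', ← hcb', Phi_mul3 σ ι x hcomm ca u cb] at hprod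
      obtain ⟨c', hc'P, hc'eq⟩ := hprod
      have hc'D : (∑ k ∈ ca.support, ∑ j ∈ cb.support,
          Finsupp.single (k + j) (ca k * (⇑σ)^[k] u * (⇑σ)^[k] (cb j))) = c' :=
        (Phi_bij ι x hbasis).1 hc'eq
      have hn : (∑ k ∈ ca.support, ∑ j ∈ cb.support,
          Finsupp.single (k + j) (ca k * (⇑σ)^[k] u * (⇑σ)^[k] (cb j)) : ℕ →₀ R) (p+q) ∈ P := by
        rw [hc'D]; exact hc'P (p + q)
      rw [doubleD_apply] at hn
      set v : ℕ → ℕ → R := fun k j => ca k * (⇑σ)^[k] u * (⇑σ)^[k] (cb j) with hv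
      set F : ℕ → R := fun k => ∑ j ∈ cb.support, (if k + j = p + q then v k j else 0) with hF
      have hFP : ∀ k ∈ ca.support.erase p, F k ∈ P := by
        intro k hk
        obtain ⟨hkp, hksupp⟩ := Finset.mem_erase.mp hk
        refine sum_mem_P h0 hadd _ _ fun j _ => ?_
        by_cases h : k + j = p + q
        · rw [if_pos h]
          rcases lt_or_gt_of_ne hkp with hlt | hgt
          · -- k < p, so j > q
            have hjq : q < j := by omega
            have : (⇑σ)^[k] (cb j) ∈ P := (hσiter k (cb j)).mp (hgt_b j hjq)
            exact (hmul _ this (ca k * (⇑σ)^[k] u)).1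
          · -- k > p
            have : ca k ∈ P := hgt_a k hgt
            exact (hmul _ ((hmul _ this ((⇑σ)^[k] u)).2) ((⇑σ)^[k] (cb j))).2
        · rw [if_neg h]; exact h0
      have hFrest : ∑ k ∈ ca.support.erase p, F k ∈ P :=
        sum_mem_P h0 hadd _ _ hFP
      have hFp_split : F p = v p q + ∑ j ∈ cb.support.erase q,
          (if p + j = p + q then v p j else 0) := by
        rw [hF]
        dsimp only
        rw [← Finset.add_sum_erase _ _ hq_supp, if_pos rfl]
      have hrest2 : ∑ j ∈ cb.support.erase q, (if p + j = p + q then v p j else 0) ∈ P := by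
        refine sum_mem_P h0 hadd _ _ fun j hj => ?_
        have hjq := (Finset.mem_erase.mp hj).1
        rw [if_neg (by omega)]
        exact h0
      have htot : F p + ∑ k ∈ ca.support.erase p, F k ∈ P := by
        rw [Finset.add_sum_erase _ _ hp_supp]
        exact hn
      have hvpq : v p q ∈ P := by
        have h1 : v p q = (F p + ∑ k ∈ ca.support.erase p, F k)
            - (∑ k ∈ ca.support.erase p, F k)
            - (∑ j ∈ cb.support.erase q, (if p + j = p + q then v p j else 0)) := by
          rw [hFp_split]; abel
        rw [h1]
        exact hsub _ (hsub _ htot _ hFrest) _ hrest2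
      exact hvpq
    have hfin : ∀ w : R, ca p * w * (⇑σ)^[p] (cb q) ∈ P := by
      intro w
      have := hval ((⇑σ.symm)^[p] w)
      rwa [iter_cancel σ p w] at this
    rcases hpr _ _ hfin with h | h
    · exact hpP h
    · exact hqP ((hσiter p (cb q)).mpr h)

end Ideal

end Modules

end Compat

end ModuleSide

end SkxAux

theorem attached_primes_inverse_polynomial_skew_superset
    {R : Type*} [Ring R] (σ : R ≃+* R)
    {S : Type*} [Ring S] (ι : R →+* S) (x : S)
    (hbasis : Function.Bijective fun c : ℕ →₀ R => c.sum fun k r => ι r * x ^ k)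
    (hcomm : ∀ r : R, x * ι r = ι (σ r) * x)
    {M : Type*} [AddCommGroup M] [Module Rᵐᵒᵖ M]
    [Module Sᵐᵒᵖ (ℕ →₀ M)]
    (hact : ∀ (m : M) (i : ℕ) (r : R) (j : ℕ),
      op (ι r * x ^ j) • Finsupp.single i m =
        if j ≤ i then Finsupp.single (i - j) (op ((⇑σ.symm)^[i] r) • m)
        else (0 : ℕ →₀ M))
    (hcompat : CompletelySigmaCompatible R (⇑σ) M) :
    ∀ P ∈ AttSet R M, polyIn ι x P ∈ AttSet S (ℕ →₀ M) := by
  classical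
  intro P hP
  obtain ⟨hPpr, N, hNco, hPeq⟩ := hP
  subst hPeq
  have hσP : ∀ r : R, r ∈ annIn R M (N : Set M) ↔ σ r ∈ annIn R M (N : Set M) :=
    SkxAux.ann_sigma_iff σ hcompat N
  refine ⟨SkxAux.polyIn_prime σ ι x hbasis hcomm _ hPpr hσP,
    SkxAux.Ntil σ ι x hbasis hact N, ⟨?_, ?_⟩, ?_⟩
  · obtain ⟨l0, hl0⟩ := hNco.1
    refine ⟨Finsupp.single 0 l0, fun hmem => hl0 ?_⟩
    have h := hmem 0
    rwa [Finsupp.single_apply, if_pos rfl] at h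
  · intro L' hle hne
    apply Set.Subset.antisymm
    · intro t ht f
      exact hle (ht f)
    · intro t ht
      have htP : t ∈ polyIn ι x (annIn R M (N : Set M)) :=
        SkxAux.annL_subset_polyIn σ ι x hbasis hact hcompat N hNco L' hle hne ht
      exact fun f => SkxAux.polyIn_subset_ann σ ι x hbasis hact hcompat N htP f
  · exact (SkxAux.ann_Ntil_eq σ ι x hbasis hact hcompat N).symm
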